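/- Let P be a finite poset that is the disjoint sum of posets C_1, C_2, …, C_t for some t ≥ 2 (the ground set of P is the disjoint union of the ground sets of the C_i, the order of P restricted to each C_i is the order of C_i, and any two elements lying in different parts are incomparable in P). Then ldim(P) ≤ 2 + max{ldim(C_i) : 1 ≤ i ≤ t}. -/

import Mathlib

/-- A partial linear extension (ple) of a poset `α`: a set `dom` together with a
linear order `rel` on `dom` extending the restriction of the partial order to `dom`. -/
structure PLE (α : Type*) [PartialOrder α] where
  dom : Set α
  rel : α → α → Prop
  refl : ∀ x ∈ dom, rel x x
  antisymm : ∀ x ∈ dom, ∀ y ∈ dom, rel x y → rel y x → x = y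
  trans : ∀ x ∈ dom, ∀ y ∈ dom, ∀ z ∈ dom, rel x y → rel y z → rel x z
  total : ∀ x ∈ dom, ∀ y ∈ dom, rel x y ∨ rel y x
  extends_le : ∀ x ∈ dom, ∀ y ∈ dom, x ≤ y → rel x y

/-- `μ(u, 𝓛)`: the number of members of the family `𝓛` whose domain contains `u`. -/
noncomputable def mu {α : Type*} [PartialOrder α] {m : ℕ} (L : Fin m → PLE α) (u : α) : ℕ :=
  Set.ncard {i : Fin m | u ∈ (L i).dom}

/-- A family of ple's is a local realizer when every strict comparability is witnessed
and every incomparable pair is reversed by some member. -/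
def IsLocalRealizer {α : Type*} [PartialOrder α] {m : ℕ} (L : Fin m → PLE α) : Prop :=
  (∀ x y : α, x < y → ∃ i, x ∈ (L i).dom ∧ y ∈ (L i).dom ∧ (L i).rel x y) ∧
  (∀ x y : α, ¬ x ≤ y → ¬ y ≤ x → ∃ i, x ∈ (L i).dom ∧ y ∈ (L i).dom ∧ (L i).rel y x)

/-- The local dimension: the least positive `d` admitting a local realizer `𝓛`
with `μ(u,𝓛) ≤ d` for every `u`. -/
noncomputable def localDim (α : Type*) [PartialOrder α] : ℕ :=
  sInf {d : ℕ | 0 < d ∧ ∃ m : ℕ, ∃ L : Fin m → PLE α,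
    IsLocalRealizer L ∧ ∀ u : α, mu L u ≤ d}

/-- ple on a pair -/
def pairPLE {γ : Type*} [PartialOrder γ] (x y : γ) : PLE γ where
  dom := {x, y}
  rel a b := a = b ∨ (x ≤ y ∧ a = x ∧ b = y) ∨ (¬ x ≤ y ∧ a = y ∧ b = x)
  refl _ _ := Or.inl rfl
  antisymm := by
    intro a _ b _ h1 h2
    rcases h1 with h1 | ⟨hxy, ha1, hb1⟩ | ⟨hxy, ha1, hb1⟩
    · exact h1
    · rcases h2 with h2 | ⟨hxy2, hb2, ha2⟩ | ⟨hxy2, hb2, ha2⟩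
      · exact h2.symm
      · exact ha1.trans hb2.symm
      · exact absurd hxy hxy2
    · rcases h2 with h2 | ⟨hxy2, hb2, ha2⟩ | ⟨hxy2, hb2, ha2⟩
      · exact h2.symm
      · exact absurd hxy2 hxy
      · exact ha1.trans hb2.symm
  trans := by
    intro a _ b _ c _ h1 h2
    rcases h1 with h1 | ⟨hxy, ha1, hb1⟩ | ⟨hxy, ha1, hb1⟩
    · exact h1 ▸ h2
    · rcases h2 with h2 | ⟨hxy2, hb2, hc2⟩ | ⟨hxy2, hb2, hc2⟩
      · exact Or.inr (Or.inl ⟨hxy, ha1, h2.symm.trans hb1⟩)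
      · exact Or.inr (Or.inl ⟨hxy, ha1, hc2⟩)
      · exact absurd hxy hxy2
    · rcases h2 with h2 | ⟨hxy2, hb2, hc2⟩ | ⟨hxy2, hb2, hc2⟩
      · exact Or.inr (Or.inr ⟨hxy, ha1, h2.symm.trans hb1⟩)
      · exact absurd hxy2 hxy
      · exact Or.inr (Or.inr ⟨hxy, ha1, hc2⟩)
  total := by
    intro a ha b hb
    simp only [Set.mem_insert_iff, Set.mem_singleton_iff] at ha hb
    rcases ha with ha | ha <;> rcases hb with hb | hb
    · exact Or.inl (Or.inl (ha.trans hb.symm))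
    · by_cases h : x ≤ y
      · exact Or.inl (Or.inr (Or.inl ⟨h, ha, hb⟩))
      · exact Or.inr (Or.inr (Or.inr ⟨h, hb, ha⟩))
    · by_cases h : x ≤ y
      · exact Or.inr (Or.inr (Or.inl ⟨h, hb, ha⟩))
      · exact Or.inl (Or.inr (Or.inr ⟨h, ha, hb⟩))
    · exact Or.inl (Or.inl (ha.trans hb.symm))
  extends_le := by
    intro a ha b hb hle
    simp only [Set.mem_insert_iff, Set.mem_singleton_iff] at ha hb
    rcases ha with ha | ha <;> rcases hb with hb | hb
    · exact Or.inl (ha.trans hb.symm)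
    · have h : x ≤ y := by rw [← ha, ← hb]; exact hle
      exact Or.inr (Or.inl ⟨h, ha, hb⟩)
    · have h' : y ≤ x := by rw [← ha, ← hb]; exact hle
      by_cases h : x ≤ y
      · exact Or.inl (ha.trans ((le_antisymm h' h).trans hb.symm))
      · exact Or.inr (Or.inr ⟨h, ha, hb⟩)
    · exact Or.inl (ha.trans hb.symm)

lemma realizer_set_nonempty (γ : Type*) [Fintype γ] [PartialOrder γ] :
    {d : ℕ | 0 < d ∧ ∃ m : ℕ, ∃ L : Fin m → PLE γ,
      IsLocalRealizer L ∧ ∀ u : γ, mu L u ≤ d}.Nonempty := by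
  classical
  set e := Fintype.equivFin (γ × γ)
  refine ⟨Fintype.card (γ × γ) + 1, Nat.succ_pos _, Fintype.card (γ × γ),
    fun j => pairPLE (e.symm j).1 (e.symm j).2, ⟨?_, ?_⟩, ?_⟩
  · intro x y hxy
    refine ⟨e (x, y), ?_⟩
    simp only [Equiv.symm_apply_apply]
    exact ⟨Or.inl rfl, Or.inr rfl, Or.inr (Or.inl ⟨hxy.le, rfl, rfl⟩)⟩
  · intro x y hxy hyx
    refine ⟨e (x, y), ?_⟩
    simp only [Equiv.symm_apply_apply]
    exact ⟨Or.inl rfl, Or.inr rfl, Or.inr (Or.inr ⟨hxy, rfl, rfl⟩)⟩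
  · intro u
    calc mu _ u ≤ (Set.univ : Set (Fin (Fintype.card (γ × γ)))).ncard :=
          Set.ncard_le_ncard (Set.subset_univ _)
      _ = Fintype.card (γ × γ) := by simp [Set.ncard_univ]
      _ ≤ Fintype.card (γ × γ) + 1 := Nat.le_succ _

/-- Lift a ple of a part to the disjoint sum. -/
def liftPLE {t : ℕ} {β : Fin t → Type*} [∀ i, PartialOrder (β i)] (i : Fin t)
    (p : PLE (β i)) : PLE (Σ j, β j) where
  dom := Sigma.mk i '' p.dom
  rel a b := ∃ x ∈ p.dom, ∃ y ∈ p.dom, p.rel x y ∧ a = ⟨i, x⟩ ∧ b = ⟨i, y⟩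
  refl := by
    rintro a ⟨x, hx, rfl⟩
    exact ⟨x, hx, x, hx, p.refl x hx, rfl, rfl⟩
  antisymm := by
    rintro a _ b _ ⟨x, hx, y, hy, hr, rfl, rfl⟩ ⟨x', hx', y', hy', hr', he1, he2⟩
    obtain rfl : y = x' := sigma_mk_injective he1
    obtain rfl : x = y' := sigma_mk_injective he2
    obtain rfl : x = y := p.antisymm x hx y hy hr hr'
    rfl
  trans := by
    rintro a _ b _ c _ ⟨x, hx, y, hy, hr, rfl, rfl⟩ ⟨x', hx', y', hy', hr', he1, rfl⟩
    obtain rfl : y = x' := sigma_mk_injective he1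
    exact ⟨x, hx, y', hy', p.trans x hx y hy y' hy' hr hr', rfl, rfl⟩
  total := by
    rintro a ⟨x, hx, rfl⟩ b ⟨y, hy, rfl⟩
    rcases p.total x hx y hy with h | h
    · exact Or.inl ⟨x, hx, y, hy, h, rfl, rfl⟩
    · exact Or.inr ⟨y, hy, x, hx, h, rfl, rfl⟩
  extends_le := by
    rintro a ⟨x, hx, rfl⟩ b ⟨y, hy, rfl⟩ hle
    exact ⟨x, hx, y, hy, p.extends_le x hx y hy (Sigma.mk_le_mk_iff.mp hle), rfl, rfl⟩

/-- A full ple from a linear order extending the partial order. -/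
def fullPLE {α : Type*} [PartialOrder α] (s : α → α → Prop) (hs : IsLinearOrder α s)
    (hext : ∀ a b : α, a ≤ b → s a b) : PLE α where
  dom := Set.univ
  rel := s
  refl x _ := hs.refl x
  antisymm x _ y _ h1 h2 := hs.antisymm x y h1 h2
  trans x _ y _ z _ h1 h2 := hs.trans x y z h1 h2
  total x _ y _ := hs.total x y
  extends_le x _ y _ h := hext x y h

/-- A partial order on the sum that additionally relates distinct parts via `c`. -/
lemma sum_rel_partialOrder {t : ℕ} (β : Fin t → Type*) [∀ i, PartialOrder (β i)]
    (c : Fin t → Fin t → Prop) (hirr : ∀ i, ¬ c i i) (htr : ∀ {i j k}, c i j → c j k → c i k) :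
    IsPartialOrder (Σ i, β i) (fun a b => c a.1 b.1 ∨ a ≤ b) := by
  have hfst : ∀ {a b : Σ i, β i}, a ≤ b → a.1 = b.1 := by
    intro a b h
    exact (Sigma.le_def.mp h).1
  refine { refl := ?_, trans := ?_, antisymm := ?_ }
  · intro a; exact Or.inr le_rfl
  · rintro a b cc (h1 | h1) (h2 | h2)
    · exact Or.inl (htr h1 h2)
    · exact Or.inl ((hfst h2) ▸ h1)
    · exact Or.inl ((hfst h1) ▸ h2)
    · exact Or.inr (h1.trans h2)
  · rintro a b (h1 | h1) (h2 | h2)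
    · exact absurd (htr h1 h2) (hirr _)
    · exact absurd ((hfst h2) ▸ h1) (hirr _)
    · exact absurd ((hfst h1).symm ▸ h2) (hirr _)
    · exact le_antisymm h1 h2

lemma mu_comp_equiv {α : Type*} [PartialOrder α] {ι : Type*} [Fintype ι] (F : ι → PLE α) (u : α) :
    mu (fun j => F ((Fintype.equivFin ι).symm j)) u = Set.ncard {k : ι | u ∈ (F k).dom} := by
  rw [mu]
  have h : {j : Fin (Fintype.card ι) | u ∈ (F ((Fintype.equivFin ι).symm j)).dom}
      = ⇑(Fintype.equivFin ι).symm ⁻¹' {k | u ∈ (F k).dom} := rfl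
  rw [h, ← Equiv.image_symm_eq_preimage,
    Set.ncard_image_of_injective _ (Fintype.equivFin ι).symm.symm.injective]

lemma ncard_sum_bound {σ : Type*} {ρ : Type*} [Fintype σ] [Fintype ρ]
    (f : ρ → σ) (hf : Function.Injective f)
    (S : Set (Fin 2 ⊕ σ)) (T : Set ρ)
    (hsub : S ⊆ (Sum.inl '' (Set.univ : Set (Fin 2))) ∪ (Sum.inr '' (f '' T))) :
    S.ncard ≤ 2 + T.ncard := by
  calc S.ncard
      ≤ ((Sum.inl '' (Set.univ : Set (Fin 2))) ∪ (Sum.inr '' (f '' T))).ncard :=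
        Set.ncard_le_ncard hsub (Set.toFinite _)
    _ ≤ (Sum.inl '' (Set.univ : Set (Fin 2))).ncard + (Sum.inr '' (f '' T)).ncard :=
        Set.ncard_union_le _ _
    _ = 2 + T.ncard := by
        rw [Set.ncard_image_of_injective _ Sum.inl_injective,
          Set.ncard_image_of_injective _ Sum.inr_injective,
          Set.ncard_image_of_injective _ hf, Set.ncard_univ]
        simp

set_option maxHeartbeats 1000000 in
/-- The local dimension of a disjoint sum of `t ≥ 2` posets is at most `2` plus the
maximum of the local dimensions of the parts. (Elements of different parts are
incomparable in `Σ i, β i`.) -/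
theorem localDim_disjoint_sum (t : ℕ) (ht : 2 ≤ t) (β : Fin t → Type*)
    [∀ i, Fintype (β i)] [∀ i, PartialOrder (β i)] :
    localDim (Σ i, β i) ≤ 2 + Finset.univ.sup (fun i => localDim (β i)) := by
  classical
  set D := Finset.univ.sup (fun i => localDim (β i)) with hD
  have hmem : ∀ i : Fin t, ∃ m : ℕ, ∃ L : Fin m → PLE (β i),
      IsLocalRealizer L ∧ ∀ u, mu L u ≤ localDim (β i) :=
    fun i => (Nat.sInf_mem (realizer_set_nonempty (β i))).2
  choose m L hreal hmu using hmem
  have hA := sum_rel_partialOrder β (fun i j => i < j) (fun i => lt_irrefl i)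
    (fun h1 h2 => h1.trans h2)
  obtain ⟨sA, hsA, hrA⟩ := @extend_partialOrder _ _ hA
  have hB := sum_rel_partialOrder β (fun i j => j < i) (fun i => lt_irrefl i)
    (fun h1 h2 => h2.trans h1)
  obtain ⟨sB, hsB, hrB⟩ := @extend_partialOrder _ _ hB
  set A : PLE (Σ i, β i) := fullPLE sA hsA (fun a b h => hrA a b (Or.inr h)) with hAdef
  set B : PLE (Σ i, β i) := fullPLE sB hsB (fun a b h => hrB a b (Or.inr h)) with hBdef
  set F : (Fin 2 ⊕ (Σ i, Fin (m i))) → PLE (Σ i, β i) :=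
    Sum.elim (fun v => if v = (0 : Fin 2) then A else B)
      (fun p => liftPLE p.1 (L p.1 p.2)) with hFdef
  set E := Fintype.equivFin (Fin 2 ⊕ (Σ i, Fin (m i))) with hEdef
  refine Nat.sInf_le ⟨by omega, Fintype.card (Fin 2 ⊕ (Σ i, Fin (m i))),
    fun j => F (E.symm j), ⟨?_, ?_⟩, ?_⟩
  · -- comparabilities
    rintro ⟨i, a⟩ ⟨j, b⟩ hxy
    obtain rfl : i = j := (Sigma.le_def.mp hxy.le).1
    have hab : a < b := by
      refine lt_of_le_of_ne (Sigma.mk_le_mk_iff.mp hxy.le) (fun hab => hxy.ne ?_)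
      rw [hab]
    obtain ⟨k, hk1, hk2, hk3⟩ := (hreal i).1 a b hab
    refine ⟨E (Sum.inr ⟨i, k⟩), ?_⟩
    simp only [Equiv.symm_apply_apply]
    exact ⟨⟨a, hk1, rfl⟩, ⟨b, hk2, rfl⟩, ⟨a, hk1, b, hk2, hk3, rfl, rfl⟩⟩
  · -- incomparabilities
    rintro ⟨i, a⟩ ⟨j, b⟩ hxy hyx
    by_cases hij : i = j
    · subst hij
      obtain ⟨k, hk1, hk2, hk3⟩ := (hreal i).2 a b
        (fun h => hxy (Sigma.mk_le_mk_iff.mpr h)) (fun h => hyx (Sigma.mk_le_mk_iff.mpr h))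
      refine ⟨E (Sum.inr ⟨i, k⟩), ?_⟩
      simp only [Equiv.symm_apply_apply]
      exact ⟨⟨a, hk1, rfl⟩, ⟨b, hk2, rfl⟩, ⟨b, hk2, a, hk1, hk3, rfl, rfl⟩⟩
    · rcases lt_or_gt_of_ne hij with h | h
      · -- i < j : use B, which puts y below x when x.1 < y.1
        refine ⟨E (Sum.inl 1), ?_⟩
        simp only [Equiv.symm_apply_apply]
        refine ⟨Set.mem_univ _, Set.mem_univ _, ?_⟩
        show (if (1 : Fin 2) = 0 then A else B).rel _ _
        rw [if_neg (by decide)]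
        exact hrB _ _ (Or.inl h)
      · -- j < i : use A
        refine ⟨E (Sum.inl 0), ?_⟩
        simp only [Equiv.symm_apply_apply]
        refine ⟨Set.mem_univ _, Set.mem_univ _, ?_⟩
        show (if (0 : Fin 2) = 0 then A else B).rel _ _
        rw [if_pos rfl]
        exact hrA _ _ (Or.inl h)
  · -- the mu bound
    rintro ⟨i, x⟩
    rw [hEdef, mu_comp_equiv]
    set S : Set (Fin 2 ⊕ (Σ i, Fin (m i))) :=
      {k | (⟨i, x⟩ : Σ i, β i) ∈ (F k).dom} with hS
    set T : Set (Fin (m i)) := {k | x ∈ (L i k).dom} with hT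
    have hsub : S ⊆ (Sum.inl '' (Set.univ : Set (Fin 2))) ∪ (Sum.inr '' (Sigma.mk i '' T)) := by
      intro k hk
      cases k with
      | inl v => exact Or.inl ⟨v, trivial, rfl⟩
      | inr p =>
        obtain ⟨i', k'⟩ := p
        obtain ⟨x', hx', heq⟩ := hk
        obtain rfl : i = i' := (congrArg Sigma.fst heq).symm
        obtain rfl : x' = x := sigma_mk_injective heq
        exact Or.inr ⟨⟨i, k'⟩, ⟨k', hx', rfl⟩, rfl⟩
    have h2 : S.ncard ≤ 2 + T.ncard :=
      ncard_sum_bound (Sigma.mk i) sigma_mk_injective S T hsub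
    have h3 : T.ncard = mu (L i) x := rfl
    have h4 : localDim (β i) ≤ D := Finset.le_sup (f := fun i => localDim (β i)) (Finset.mem_univ i)
    have h5 := hmu i x
    calc S.ncard ≤ 2 + T.ncard := h2
      _ ≤ 2 + D := by rw [h3]; omega
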